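/- For every subset S ⊆ [n−1] with co(S) = (γ₁,...,γₖ₊₁) the composition of n given by consecutive differences of elements of S (with endpoints 0 and n), the number of permutations σ ∈ Sₙ with alternating descent set contained in S equals the multinomial coefficient n!/(γ₁!⋯γₖ₊₁!) times the product E_{γ₁}⋯E_{γₖ₊₁} of Euler numbers. -/

import Mathlib

open Finset
open scoped Classical

/-- entry of a permutation of `Fin n` at 0-indexed position `i` (0-based values). -/
def ent {n : ℕ} (σ : Equiv.Perm (Fin n)) (i : ℕ) : ℕ :=
  if h : i < n then (σ ⟨i, h⟩ : ℕ) else 0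

/-- the triple `(a, b, c)` of distinct values, reduced to a permutation in `S₃`, is odd. -/
def odd3 (a b c : ℕ) : Prop :=
  ((if b < a then 1 else 0) + (if c < a then 1 else 0) + (if c < b then 1 else 0)) % 2 = 1

instance (a b c : ℕ) : Decidable (odd3 a b c) := by
  unfold odd3; infer_instance

/-- 3-descent set, 0-indexed positions (position `i` here is paper position `i+1`). -/
def D3 {n : ℕ} (σ : Equiv.Perm (Fin n)) : Finset ℕ :=
  (Finset.range (n - 2)).filter (fun i => odd3 (ent σ i) (ent σ (i + 1)) (ent σ (i + 2)))

/-- alternating descent set, 0-indexed positions. -/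
def altD {n : ℕ} (σ : Equiv.Perm (Fin n)) : Finset ℕ :=
  (Finset.range (n - 1)).filter (fun i =>
    (Even i ∧ ent σ (i + 1) < ent σ i) ∨ (¬ Even i ∧ ent σ i < ent σ (i + 1)))

/-- number of up-down alternating permutations of `[n]` (the Euler number `Eₙ`). -/
noncomputable def EulerNum (n : ℕ) : ℕ :=
  ((Finset.univ : Finset (Equiv.Perm (Fin n))).filter (fun τ =>
    ∀ i ∈ Finset.range (n - 1),
      (Even i ∧ ent τ i < ent τ (i + 1)) ∨ (¬ Even i ∧ ent τ (i + 1) < ent τ i))).card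

/-- `c³ᵢ(σ)`, 0-indexed: number of `j > i+1` with `σᵢ σᵢ₊₁ σⱼ` odd. -/
def c3 {n : ℕ} (σ : Equiv.Perm (Fin n)) (i : ℕ) : ℕ :=
  ((Finset.range n).filter (fun j => i + 1 < j ∧ odd3 (ent σ i) (ent σ (i + 1)) (ent σ j))).card

/-- `ĉᵢ(σ)`, 0-indexed. -/
def chat {n : ℕ} (σ : Equiv.Perm (Fin n)) (i : ℕ) : ℕ :=
  ((Finset.range n).filter (fun j => i < j ∧
    ((Even i ∧ ent σ j < ent σ i) ∨ (¬ Even i ∧ ent σ i < ent σ j)))).card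

/-- `i₃` of an arbitrary word `f 0, f 1, ..., f (m-1)`. -/
def i3f (m : ℕ) (f : ℕ → ℕ) : ℕ :=
  ((Finset.range m ×ˢ Finset.range m).filter (fun p =>
    p.1 + 1 < p.2 ∧ odd3 (f p.1) (f (p.1 + 1)) (f p.2))).card

/-- the 3-inversion statistic `i₃`. -/
def i3 {n : ℕ} (σ : Equiv.Perm (Fin n)) : ℕ := i3f n (ent σ)

/-- the word `1*σ` (0-based values): `0, σ₀+1, σ₁+1, ...`. -/
def oneStar {n : ℕ} (σ : Equiv.Perm (Fin n)) : ℕ → ℕ :=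
  fun i => if i = 0 then 0 else ent σ (i - 1) + 1

/-- number of alternating inversions `î(σ)`. -/
def altInv {n : ℕ} (σ : Equiv.Perm (Fin n)) : ℕ :=
  ((Finset.range n ×ˢ Finset.range n).filter (fun p => p.1 < p.2 ∧
    ((Even p.1 ∧ ent σ p.2 < ent σ p.1) ∨ (¬ Even p.1 ∧ ent σ p.1 < ent σ p.2)))).card

/-- number of inversions of the word `f 0, ..., f (m-1)`. -/
def invf (m : ℕ) (f : ℕ → ℕ) : ℕ :=
  ((Finset.range m ×ˢ Finset.range m).filter (fun p => p.1 < p.2 ∧ f p.2 < f p.1)).card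

/-- major index of the word `f 0, ..., f (m-1)` (descent at 0-indexed `i` contributes `i+1`). -/
def majf (m : ℕ) (f : ℕ → ℕ) : ℕ :=
  ∑ i ∈ (Finset.range (m - 1)).filter (fun i => f (i + 1) < f i), (i + 1)

/-- `Â(m, r)`: number of permutations of `[m]` with `r - 1` alternating descents. -/
def Ahat (m r : ℕ) : ℕ :=
  ((Finset.univ : Finset (Equiv.Perm (Fin m))).filter (fun σ => (altD σ).card + 1 = r)).card

/-- down-up alternating: `σ₁ > σ₂ < σ₃ > ⋯`. -/
def DownUp {n : ℕ} (σ : Equiv.Perm (Fin n)) : Prop :=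
  ∀ i ∈ Finset.range (n - 1),
    (Even i ∧ ent σ (i + 1) < ent σ i) ∨ (¬ Even i ∧ ent σ i < ent σ (i + 1))

instance {n : ℕ} (σ : Equiv.Perm (Fin n)) : Decidable (DownUp σ) := by
  unfold DownUp; infer_instance

/-- up-down alternating: `σ₁ < σ₂ > σ₃ < ⋯`. -/
def UpDown {n : ℕ} (σ : Equiv.Perm (Fin n)) : Prop :=
  ∀ i ∈ Finset.range (n - 1),
    (Even i ∧ ent σ i < ent σ (i + 1)) ∨ (¬ Even i ∧ ent σ (i + 1) < ent σ i)

namespace Pf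

lemma ent_eq {n : ℕ} (σ : Equiv.Perm (Fin n)) {i : ℕ} (h : i < n) :
    ent σ i = (σ ⟨i, h⟩ : ℕ) := dif_pos h

def Bg (g : ℕ → ℕ) (i : ℕ) : ℕ := ∑ j ∈ Finset.range i, g j

lemma Bg_succ (g : ℕ → ℕ) (i : ℕ) : Bg g (i + 1) = Bg g i + g i := Finset.sum_range_succ g i

lemma Bg_mono (g : ℕ → ℕ) : Monotone (Bg g) := fun _ _ h =>
  Finset.sum_le_sum_of_subset (Finset.range_subset_range.2 h)

lemma Bg_lt {g : ℕ → ℕ} {i j a b : ℕ} (hij : i < j) (ha : a < g i) :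
    Bg g i + a < Bg g j + b :=
  lt_of_lt_of_le (by omega : Bg g i + a < Bg g i + g i)
    (le_trans (by rw [← Bg_succ]; exact Bg_mono g hij) (Nat.le_add_right _ _))

lemma decomp_unique {g : ℕ → ℕ} {i j a b : ℕ} (ha : a < g i) (hb : b < g j)
    (h : Bg g i + a = Bg g j + b) : i = j ∧ a = b := by
  rcases lt_trichotomy i j with hij | hij | hij
  · exact absurd h (ne_of_lt (Bg_lt hij ha))
  · subst hij; omega
  · exact absurd h.symm (ne_of_lt (Bg_lt hij hb))

/-- the alternating pattern predicate for a block starting at global position `p`. -/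
def Pat (m p : ℕ) (v : Equiv.Perm (Fin m)) : Prop :=
  ∀ a ∈ Finset.range (m - 1),
    (Even (p + a) ∧ ent v a < ent v (a + 1)) ∨ (¬ Even (p + a) ∧ ent v (a + 1) < ent v a)

lemma ent_rev_lt {m : ℕ} (τ : Equiv.Perm (Fin m)) {a b : ℕ} (ha : a < m) (hb : b < m) :
    ent (Fin.revPerm * τ) a < ent (Fin.revPerm * τ) b ↔ ent τ b < ent τ a := by
  have e1 := ent_eq (Fin.revPerm * τ) ha
  have e2 := ent_eq (Fin.revPerm * τ) hb
  have e3 := ent_eq τ ha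
  have e4 := ent_eq τ hb
  rw [e1, e2, e3, e4]
  show ((Fin.rev (τ ⟨a, ha⟩)) : ℕ) < ((Fin.rev (τ ⟨b, hb⟩)) : ℕ) ↔ _
  rw [← Fin.lt_def, ← Fin.lt_def, Fin.rev_lt_rev]

lemma rev_rev_perm {m : ℕ} (τ : Equiv.Perm (Fin m)) :
    Fin.revPerm * (Fin.revPerm * τ) = τ := by
  ext x; simp

lemma patZero (m : ℕ) :
    ((Finset.univ : Finset (Equiv.Perm (Fin m))).filter (Pat m 0)).card = EulerNum m := by
  rw [EulerNum]
  apply congrArg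
  ext τ
  simp only [Finset.mem_filter, Finset.mem_univ, true_and]
  unfold Pat
  simp only [Nat.zero_add]

lemma patCard (m p : ℕ) :
    ((Finset.univ : Finset (Equiv.Perm (Fin m))).filter (Pat m p)).card = EulerNum m := by
  rw [← patZero m]
  by_cases hp : Even p
  · apply congrArg
    apply Finset.filter_congr
    intro τ _
    have he : ∀ a : ℕ, Even (p + a) ↔ Even a := fun a => by
      rw [Nat.even_add]; exact ⟨fun h => h.1 hp, fun h => ⟨fun _ => h, fun _ => hp⟩⟩
    unfold Pat
    constructor
    · intro h a ha; rcases h a ha with ⟨h1, h2⟩ | ⟨h1, h2⟩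
      · exact Or.inl ⟨by rw [Nat.zero_add]; exact (he a).1 h1, h2⟩
      · exact Or.inr ⟨by rw [Nat.zero_add]; exact fun c => h1 ((he a).2 c), h2⟩
    · intro h a ha; rcases h a ha with ⟨h1, h2⟩ | ⟨h1, h2⟩
      · rw [Nat.zero_add] at h1; exact Or.inl ⟨(he a).2 h1, h2⟩
      · rw [Nat.zero_add] at h1; exact Or.inr ⟨fun c => h1 ((he a).1 c), h2⟩
  · have he : ∀ a : ℕ, Even (p + a) ↔ ¬ Even a := fun a => by
      rw [Nat.even_add]
      constructor
      · intro h c; exact hp (h.2 c)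
      · intro h; exact ⟨fun c => absurd c hp, fun c => absurd c h⟩
    refine Finset.card_nbij' (fun τ => Fin.revPerm * τ) (fun τ => Fin.revPerm * τ) ?_ ?_ ?_ ?_
    · intro τ hτ
      rw [Finset.mem_coe, Finset.mem_filter] at hτ ⊢
      refine ⟨Finset.mem_univ _, ?_⟩
      intro a ha
      have ham : a < m - 1 := Finset.mem_range.1 ha
      have h1 : a < m := by omega
      have h2 : a + 1 < m := by omega
      rcases hτ.2 a ha with ⟨hc, hlt⟩ | ⟨hc, hlt⟩
      · refine Or.inr ⟨by rw [Nat.zero_add]; exact (he a).1 hc, ?_⟩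
        rw [ent_rev_lt τ h2 h1]; exact hlt
      · refine Or.inl ⟨by rw [Nat.zero_add]; exact not_not.1 (fun c => hc ((he a).2 c)), ?_⟩
        rw [ent_rev_lt τ h1 h2]; exact hlt
    · intro τ hτ
      rw [Finset.mem_coe, Finset.mem_filter] at hτ ⊢
      refine ⟨Finset.mem_univ _, ?_⟩
      intro a ha
      have ham : a < m - 1 := Finset.mem_range.1 ha
      have h1 : a < m := by omega
      have h2 : a + 1 < m := by omega
      rcases hτ.2 a ha with ⟨hc, hlt⟩ | ⟨hc, hlt⟩
      · rw [Nat.zero_add] at hc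
        refine Or.inr ⟨fun c => ((he a).1 c) hc, ?_⟩
        rw [ent_rev_lt τ h2 h1]; exact hlt
      · rw [Nat.zero_add] at hc
        refine Or.inl ⟨(he a).2 hc, ?_⟩
        rw [ent_rev_lt τ h1 h2]; exact hlt
    · intro τ _; exact rev_rev_perm τ
    · intro τ _; exact rev_rev_perm τ

/-- `{x : α × β // p x.1} ≃ {a // p a} × β`. -/
def prodSubtypeFst {α β : Type*} (p : α → Prop) : {x : α × β // p x.1} ≃ {a : α // p a} × β where
  toFun x := (⟨x.1.1, x.2⟩, x.1.2)
  invFun y := ⟨(y.1.1, y.2), y.1.2⟩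
  left_inv x := rfl
  right_inv y := rfl

section
variable {n k : ℕ} {g : ℕ → ℕ} (hsum : ∑ i ∈ Finset.range (k+1), g i = n)
include hsum

lemma pos_lt (i : Fin (k+1)) (a : Fin (g i)) : Bg g i + (a : ℕ) < n := by
  have h1 : Bg g ((i : ℕ) + 1) ≤ Bg g (k+1) := Bg_mono g (by omega)
  have : Bg g (k+1) = n := hsum
  have := Bg_succ g (i : ℕ)
  omega

def posf : (Σ i : Fin (k+1), Fin (g i)) → Fin n :=
  fun p => ⟨Bg g p.1 + (p.2 : ℕ), pos_lt hsum p.1 p.2⟩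

lemma posf_inj : Function.Injective (posf hsum) := by
  rintro ⟨i, a⟩ ⟨j, b⟩ h
  have h' : Bg g i + (a : ℕ) = Bg g j + (b : ℕ) := congrArg Fin.val h
  rcases lt_trichotomy (i : ℕ) (j : ℕ) with hij | hij | hij
  · exact absurd h' (ne_of_lt (Bg_lt hij a.isLt))
  · have hij' : i = j := Fin.ext hij
    subst hij'
    have : (a : ℕ) = (b : ℕ) := by omega
    simp [Fin.ext_iff, this]
  · exact absurd h'.symm (ne_of_lt (Bg_lt hij b.isLt))

lemma posf_bij : Function.Bijective (posf hsum) := by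
  rw [Fintype.bijective_iff_injective_and_card]
  refine ⟨posf_inj hsum, ?_⟩
  rw [Fintype.card_sigma, Fintype.card_fin]
  simp only [Fintype.card_fin]
  rw [Fin.sum_univ_eq_sum_range]
  exact hsum

noncomputable def posE : (Σ i : Fin (k+1), Fin (g i)) ≃ Fin n :=
  Equiv.ofBijective _ (posf_bij hsum)

lemma posE_val (i : Fin (k+1)) (a : Fin (g i)) :
    ((posE hsum ⟨i, a⟩ : Fin n) : ℕ) = Bg g i + a := rfl

/-- blockwise permutation of positions -/
noncomputable def tilt (v : ∀ i : Fin (k+1), Equiv.Perm (Fin (g i))) : Equiv.Perm (Fin n) :=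
  (posE hsum).permCongr (Equiv.sigmaCongrRight v)

lemma tilt_apply (v : ∀ i : Fin (k+1), Equiv.Perm (Fin (g i))) (i : Fin (k+1)) (a : Fin (g i)) :
    tilt hsum v (posE hsum ⟨i, a⟩) = posE hsum ⟨i, v i a⟩ := by
  simp [tilt, Equiv.permCongr_apply]

lemma tilt_inv_apply (v : ∀ i : Fin (k+1), Equiv.Perm (Fin (g i))) (i : Fin (k+1))
    (a : Fin (g i)) : (tilt hsum v)⁻¹ (posE hsum ⟨i, a⟩) = posE hsum ⟨i, (v i)⁻¹ a⟩ := by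
  apply (tilt hsum v).injective
  rw [Equiv.Perm.inv_def (tilt hsum v), Equiv.apply_symm_apply, tilt_apply]
  simp

/-- block monotone -/
def BM (u : Equiv.Perm (Fin n)) : Prop :=
  ∀ i : Fin (k+1), StrictMono (fun a : Fin (g i) => u (posE hsum ⟨i, a⟩))

lemma block_inj (σ : Equiv.Perm (Fin n)) (i : Fin (k+1)) :
    Function.Injective (fun a : Fin (g i) => σ (posE hsum ⟨i, a⟩)) := fun _ _ h =>
  eq_of_heq (Sigma.mk.inj_iff.mp ((posE hsum).injective (σ.injective h))).2

/-- values of `σ` on block `i` -/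
noncomputable def W (σ : Equiv.Perm (Fin n)) (i : Fin (k+1)) : Finset (Fin n) :=
  Finset.image (fun a : Fin (g i) => σ (posE hsum ⟨i, a⟩)) Finset.univ

lemma W_card (σ : Equiv.Perm (Fin n)) (i : Fin (k+1)) : (W hsum σ i).card = g i := by
  rw [W, Finset.card_image_of_injective _ (block_inj hsum σ i)]
  simp

lemma mem_W (σ : Equiv.Perm (Fin n)) (i : Fin (k+1)) (a : Fin (g i)) :
    σ (posE hsum ⟨i, a⟩) ∈ W hsum σ i :=
  Finset.mem_image_of_mem _ (Finset.mem_univ a)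

noncomputable def stdf (σ : Equiv.Perm (Fin n)) (i : Fin (k+1)) : Fin (g i) → Fin (g i) :=
  fun a => ((W hsum σ i).orderIsoOfFin (W_card hsum σ i)).symm ⟨_, mem_W hsum σ i a⟩

lemma stdf_inj (σ : Equiv.Perm (Fin n)) (i : Fin (k+1)) :
    Function.Injective (stdf hsum σ i) := by
  intro a b h
  have := ((W hsum σ i).orderIsoOfFin (W_card hsum σ i)).symm.injective.eq_iff.mp h
  exact block_inj hsum σ i (congrArg Subtype.val this)

noncomputable def std (σ : Equiv.Perm (Fin n)) (i : Fin (k+1)) : Equiv.Perm (Fin (g i)) :=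
  Equiv.ofBijective _ ((Finite.injective_iff_bijective).1 (stdf_inj hsum σ i))

lemma std_spec (σ : Equiv.Perm (Fin n)) (i : Fin (k+1)) (a : Fin (g i)) :
    ((W hsum σ i).orderEmbOfFin (W_card hsum σ i)) (std hsum σ i a) = σ (posE hsum ⟨i, a⟩) := by
  have : ((W hsum σ i).orderIsoOfFin (W_card hsum σ i)) (std hsum σ i a)
      = ⟨_, mem_W hsum σ i a⟩ := OrderIso.apply_symm_apply _ _
  have := congrArg Subtype.val this
  rwa [Finset.coe_orderIsoOfFin_apply] at this

noncomputable def srt (σ : Equiv.Perm (Fin n)) : Equiv.Perm (Fin n) :=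
  σ * (tilt hsum (std hsum σ))⁻¹

lemma srt_apply (σ : Equiv.Perm (Fin n)) (i : Fin (k+1)) (a : Fin (g i)) :
    srt hsum σ (posE hsum ⟨i, a⟩)
      = ((W hsum σ i).orderEmbOfFin (W_card hsum σ i)) a := by
  have h1 : srt hsum σ (posE hsum ⟨i, a⟩) = σ (posE hsum ⟨i, (std hsum σ i)⁻¹ a⟩) := by
    rw [srt, Equiv.Perm.mul_apply, tilt_inv_apply]
  rw [h1, ← std_spec hsum σ i ((std hsum σ i)⁻¹ a), Equiv.Perm.inv_def (std hsum σ i), Equiv.apply_symm_apply]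

lemma BM_srt (σ : Equiv.Perm (Fin n)) : BM hsum (srt hsum σ) := by
  intro i a b hab
  simp only [srt_apply]
  exact ((W hsum σ i).orderEmbOfFin (W_card hsum σ i)).strictMono hab

lemma std_of_BM (v : ∀ i : Fin (k+1), Equiv.Perm (Fin (g i)))
    (u : Equiv.Perm (Fin n)) (hu : BM hsum u) (i : Fin (k+1)) :
    std hsum (u * tilt hsum v) i = v i := by
  set σ := u * tilt hsum v with hσ
  have hσa : ∀ b : Fin (g i), σ (posE hsum ⟨i, b⟩) = u (posE hsum ⟨i, v i b⟩) := by
    intro b; rw [hσ, Equiv.Perm.mul_apply, tilt_apply]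
  have hmem : ∀ b : Fin (g i), u (posE hsum ⟨i, b⟩) ∈ W hsum σ i := by
    intro b
    have : u (posE hsum ⟨i, b⟩) = σ (posE hsum ⟨i, (v i)⁻¹ b⟩) := by
      rw [hσa, Equiv.Perm.inv_def (v i), Equiv.apply_symm_apply]
    rw [this]; exact mem_W hsum σ i _
  have huniq : (fun b : Fin (g i) => u (posE hsum ⟨i, b⟩))
      = (W hsum σ i).orderEmbOfFin (W_card hsum σ i) :=
    Finset.orderEmbOfFin_unique (W_card hsum σ i) hmem (hu i)
  ext a
  have h2 : ((W hsum σ i).orderEmbOfFin (W_card hsum σ i)) (std hsum σ i a)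
      = ((W hsum σ i).orderEmbOfFin (W_card hsum σ i)) (v i a) := by
    rw [std_spec, hσa, congrFun huniq (v i a)]
  exact congrArg Fin.val (((W hsum σ i).orderEmbOfFin (W_card hsum σ i)).injective h2)

/-- the factorization equivalence -/
noncomputable def Φ : ((∀ i : Fin (k+1), Equiv.Perm (Fin (g i)))
    × {u : Equiv.Perm (Fin n) // BM hsum u}) ≃ Equiv.Perm (Fin n) where
  toFun p := p.2.1 * tilt hsum p.1
  invFun σ := ⟨std hsum σ, ⟨srt hsum σ, BM_srt hsum σ⟩⟩
  left_inv := by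
    rintro ⟨v, u, hu⟩
    have h1 : std hsum (u * tilt hsum v) = v := funext fun i => std_of_BM hsum v u hu i
    refine Prod.ext ?_ (Subtype.ext ?_) <;> simp only [srt, h1]
    · exact mul_inv_cancel_right u (tilt hsum v)
  right_inv σ := by
    simp only [srt]
    exact inv_mul_cancel_right σ (tilt hsum (std hsum σ))

lemma ent_blk (σ : Equiv.Perm (Fin n)) (i : Fin (k+1)) (a : Fin (g i)) :
    ent σ (Bg g i + (a : ℕ)) = (σ (posE hsum ⟨i, a⟩) : ℕ) :=
  ent_eq σ (pos_lt hsum i a)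

lemma cmp_blk {u : Equiv.Perm (Fin n)} (hu : BM hsum u) (i : Fin (k+1)) (a b : Fin (g i)) :
    ((u (posE hsum ⟨i, a⟩)) : ℕ) < (u (posE hsum ⟨i, b⟩) : ℕ) ↔ (a : ℕ) < (b : ℕ) := by
  rw [← Fin.lt_def, ← Fin.lt_def]
  exact (hu i).lt_iff_lt

lemma altD_iff (hpos : ∀ i ∈ Finset.range (k + 1), 1 ≤ g i)
    (v : ∀ i : Fin (k+1), Equiv.Perm (Fin (g i))) (u : Equiv.Perm (Fin n)) (hu : BM hsum u) :
    altD (u * tilt hsum v)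
        ⊆ (Finset.range k).image (fun i => (∑ j ∈ Finset.range (i + 1), g j) - 1)
      ↔ ∀ i : Fin (k+1), Pat (g i) (Bg g i) (v i) := by
  set σ := u * tilt hsum v with hσ
  have hent : ∀ (i : Fin (k+1)) (a : Fin (g i)),
      ent σ (Bg g i + (a : ℕ)) = (u (posE hsum ⟨i, v i a⟩) : ℕ) := by
    intro i a
    rw [ent_blk hsum σ i a, hσ, Equiv.Perm.mul_apply, tilt_apply]
  have himg : ∀ j : ℕ, (∑ x ∈ Finset.range (j + 1), g x) - 1 = Bg g (j+1) - 1 := fun j => rfl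
  constructor
  · intro hS i
    unfold Pat
    intro a ha
    rw [Finset.mem_range] at ha
    have hgi2 : 2 ≤ g i := by omega
    have ha1 : a + 1 < g i := by omega
    have ha0 : a < g i := by omega
    set A : Fin (g i) := ⟨a, ha0⟩ with hA
    set A' : Fin (g i) := ⟨a + 1, ha1⟩ with hA'
    have hAv : (A : ℕ) = a := rfl
    have hA'v : (A' : ℕ) = a + 1 := rfl
    set p := Bg g (i : ℕ) + a with hp
    have hpn : p + 1 < n := by
      have := pos_lt hsum i A'
      rw [hA'v] at this
      omega
    have hnotS : p ∉ (Finset.range k).image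
        (fun j => (∑ x ∈ Finset.range (j + 1), g x) - 1) := by
      intro hmem
      rw [Finset.mem_image] at hmem
      obtain ⟨j, hj, hje⟩ := hmem
      rw [Finset.mem_range] at hj
      have hgj : 1 ≤ g j := hpos j (Finset.mem_range.2 (by omega))
      have hje' : Bg g j + (g j - 1) = Bg g (i : ℕ) + a := by
        rw [himg] at hje
        have := Bg_succ g j
        omega
      obtain ⟨hij, haj⟩ := decomp_unique (by omega : g j - 1 < g j) ha0 hje'
      subst hij
      omega
    have hnotD : p ∉ altD σ := fun h => hnotS (hS h)
    simp only [altD, Finset.mem_filter, Finset.mem_range, not_and, not_or] at hnotD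
    have hkey := hnotD (by omega : p < n - 1)
    have hes1 : ent σ p = (u (posE hsum ⟨i, v i A⟩) : ℕ) := by
      rw [hp, ← hAv]; exact hent i A
    have hes2 : ent σ (p + 1) = (u (posE hsum ⟨i, v i A'⟩) : ℕ) := by
      have h1 : p + 1 = Bg g (i : ℕ) + ((A' : ℕ)) := by rw [hA'v]; omega
      rw [h1]; exact hent i A'
    have hne : (u (posE hsum ⟨i, v i A⟩) : ℕ) ≠ (u (posE hsum ⟨i, v i A'⟩) : ℕ) := by
      intro hE
      have h1 : u (posE hsum ⟨i, v i A⟩) = u (posE hsum ⟨i, v i A'⟩) := Fin.val_injective hE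
      have h2 := (posE hsum).injective (u.injective h1)
      have h3 : v i A = v i A' := eq_of_heq (Sigma.mk.inj_iff.mp h2).2
      have h4 : A = A' := (v i).injective h3
      have h5 : a = a + 1 := by
        rw [← hAv, ← hA'v, h4]
      omega
    have e1 : ent (v i) a = ((v i) A : ℕ) := ent_eq (v i) ha0
    have e2 : ent (v i) (a + 1) = ((v i) A' : ℕ) := ent_eq (v i) ha1
    by_cases hEp : Even p
    · refine Or.inl ⟨hEp, ?_⟩
      have hle : ent σ p ≤ ent σ (p + 1) := le_of_not_gt (hkey.1 hEp)
      rw [hes1, hes2] at hle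
      have hlt : (u (posE hsum ⟨i, v i A⟩) : ℕ) < (u (posE hsum ⟨i, v i A'⟩) : ℕ) :=
        lt_of_le_of_ne hle hne
      rw [e1, e2]
      exact (cmp_blk hsum hu i (v i A) (v i A')).1 hlt
    · refine Or.inr ⟨hEp, ?_⟩
      have hle : ent σ (p + 1) ≤ ent σ p := le_of_not_gt (hkey.2 hEp)
      rw [hes1, hes2] at hle
      have hlt : (u (posE hsum ⟨i, v i A'⟩) : ℕ) < (u (posE hsum ⟨i, v i A⟩) : ℕ) :=
        lt_of_le_of_ne hle (Ne.symm hne)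
      rw [e1, e2]
      exact (cmp_blk hsum hu i (v i A') (v i A)).1 hlt
  · intro hPat p hpD
    simp only [altD, Finset.mem_filter, Finset.mem_range] at hpD
    obtain ⟨hpr, hpd⟩ := hpD
    have hpn : p < n := by omega
    obtain ⟨⟨i, A⟩, hPA⟩ := (posE hsum).surjective ⟨p, hpn⟩
    have hpval : Bg g (i : ℕ) + (A : ℕ) = p := congrArg Fin.val hPA
    by_cases hA : (A : ℕ) + 1 < g i
    · exfalso
      have hp2 := hPat i (A : ℕ) (Finset.mem_range.2 (by omega))
      set A' : Fin (g i) := ⟨(A : ℕ) + 1, hA⟩ with hA'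
      have hes1 : ent σ p = (u (posE hsum ⟨i, v i A⟩) : ℕ) := by
        rw [← hpval]
        have := hent i A
        simpa using this
      have hes2 : ent σ (p + 1) = (u (posE hsum ⟨i, v i A'⟩) : ℕ) := by
        have h1 : p + 1 = Bg g (i : ℕ) + ((A' : ℕ)) := by
          have : (A' : ℕ) = (A : ℕ) + 1 := rfl
          omega
        rw [h1]; exact hent i A'
      have e1 : ent (v i) (A : ℕ) = ((v i) A : ℕ) := by
        have := ent_eq (v i) A.isLt
        simpa using this
      have e2 : ent (v i) ((A : ℕ) + 1) = ((v i) A' : ℕ) := ent_eq (v i) hA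
      rcases hpd with ⟨hEp, hlt⟩ | ⟨hEp, hlt⟩
      · have hEp' : Even (Bg g (i : ℕ) + (A : ℕ)) := by rw [hpval]; exact hEp
        rcases hp2 with ⟨_, h2⟩ | ⟨hc, _⟩
        · rw [e1, e2] at h2
          have := (cmp_blk hsum hu i (v i A) (v i A')).2
            (by rw [← Fin.lt_def] at h2 ⊢; exact h2)
          rw [← hes1, ← hes2] at this
          exact absurd hlt (lt_asymm this)
        · exact hc hEp'
      · have hEp' : ¬ Even (Bg g (i : ℕ) + (A : ℕ)) := by rw [hpval]; exact hEp
        rcases hp2 with ⟨hc, _⟩ | ⟨_, h2⟩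
        · exact hEp' hc
        · rw [e1, e2] at h2
          have := (cmp_blk hsum hu i (v i A') (v i A)).2
            (by rw [← Fin.lt_def] at h2 ⊢; exact h2)
          rw [← hes1, ← hes2] at this
          exact absurd hlt (lt_asymm this)
    · have hgi : 1 ≤ g i := hpos i (Finset.mem_range.2 i.isLt)
      have hAeq : (A : ℕ) = g i - 1 := by have := A.isLt; omega
      by_cases hik : (i : ℕ) < k
      · rw [Finset.mem_image]
        refine ⟨(i : ℕ), Finset.mem_range.2 hik, ?_⟩
        rw [himg]
        have := Bg_succ g (i : ℕ)
        omega
      · exfalso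
        have hik' : (i : ℕ) = k := by have := i.isLt; omega
        have h1 : Bg g ((i : ℕ) + 1) = n := by rw [hik']; exact hsum
        have h2 := Bg_succ g (i : ℕ)
        omega

end
end Pf

theorem stmt13 (n k : ℕ) (g : ℕ → ℕ)
    (hpos : ∀ i ∈ Finset.range (k + 1), 1 ≤ g i)
    (hsum : ∑ i ∈ Finset.range (k + 1), g i = n) :
    ((Finset.univ : Finset (Equiv.Perm (Fin n))).filter (fun σ =>
        altD σ ⊆ (Finset.range k).image (fun i => (∑ j ∈ Finset.range (i + 1), g j) - 1))).card *
      ∏ i ∈ Finset.range (k + 1), Nat.factorial (g i) =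
    Nat.factorial n * ∏ i ∈ Finset.range (k + 1), EulerNum (g i) := by
  classical
  set S := (Finset.range k).image (fun i => (∑ j ∈ Finset.range (i + 1), g j) - 1) with hSdef
  set C := Fintype.card {u : Equiv.Perm (Fin n) // Pf.BM hsum u} with hC
  -- total count
  have hcard1 : Nat.factorial n = (∏ i : Fin (k+1), Nat.factorial (g i)) * C := by
    have hn : Nat.factorial n = Fintype.card (Equiv.Perm (Fin n)) := by
      rw [Fintype.card_perm, Fintype.card_fin]
    rw [hC, hn, ← Fintype.card_congr (Pf.Φ hsum), Fintype.card_prod, Fintype.card_pi]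
    congr 1
    apply Finset.prod_congr rfl
    intro i _
    rw [Fintype.card_perm, Fintype.card_fin]
  -- filtered count
  have hcard2 : ((Finset.univ : Finset (Equiv.Perm (Fin n))).filter (fun σ => altD σ ⊆ S)).card
      = (∏ i : Fin (k+1), EulerNum (g i)) * C := by
    rw [← Fintype.card_subtype]
    have e1 : {x : (∀ i : Fin (k+1), Equiv.Perm (Fin (g i)))
          × {u : Equiv.Perm (Fin n) // Pf.BM hsum u} // altD (Pf.Φ hsum x) ⊆ S}
        ≃ {σ : Equiv.Perm (Fin n) // altD σ ⊆ S} :=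
      Equiv.subtypeEquiv (Pf.Φ hsum) (fun x => Iff.rfl)
    have e2 : {x : (∀ i : Fin (k+1), Equiv.Perm (Fin (g i)))
          × {u : Equiv.Perm (Fin n) // Pf.BM hsum u} // altD (Pf.Φ hsum x) ⊆ S}
        ≃ {x : (∀ i : Fin (k+1), Equiv.Perm (Fin (g i)))
          × {u : Equiv.Perm (Fin n) // Pf.BM hsum u} //
            ∀ i : Fin (k+1), Pf.Pat (g i) (Pf.Bg g i) (x.1 i)} :=
      Equiv.subtypeEquiv (Equiv.refl _)
        (fun x => by
          rw [hSdef]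
          exact Pf.altD_iff hsum hpos x.1 x.2.1 x.2.2)
    have e3 := Pf.prodSubtypeFst
      (β := {u : Equiv.Perm (Fin n) // Pf.BM hsum u})
      (fun v : ∀ i : Fin (k+1), Equiv.Perm (Fin (g i)) =>
        ∀ i : Fin (k+1), Pf.Pat (g i) (Pf.Bg g i) (v i))
    have e4 : {v : ∀ i : Fin (k+1), Equiv.Perm (Fin (g i)) //
          ∀ i : Fin (k+1), Pf.Pat (g i) (Pf.Bg g i) (v i)}
        ≃ ∀ i : Fin (k+1), {w : Equiv.Perm (Fin (g i)) // Pf.Pat (g i) (Pf.Bg g i) w} :=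
      Equiv.subtypePiEquivPi
    rw [Fintype.card_congr (e1.symm.trans (e2.trans (e3.trans (Equiv.prodCongr e4 (Equiv.refl _))))),
      Fintype.card_prod, Fintype.card_pi]
    congr 1
    apply Finset.prod_congr rfl
    intro i _
    rw [Fintype.card_subtype]
    exact Pf.patCard (g i) (Pf.Bg g i)
  rw [hcard2, hcard1, ← Fin.prod_univ_eq_prod_range (fun i => Nat.factorial (g i)) (k+1),
    ← Fin.prod_univ_eq_prod_range (fun i => EulerNum (g i)) (k+1)]
  ring
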